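/- The function $r_X(\delta)$ is convex and non-decreasing in $\delta$ on $[0,\infty)$, and strictly increasing on $[0, \Delta^*(X))$ where $\Delta^*(X) = \lim_{\lambda\uparrow\lambda^*(X)} \delta(\lambda)$. -/

import Mathlib

open scoped BigOperators
open Classical in
/-- Extended-real-valued right rate function
`r_X(δ) = sup_{λ≥0} [λ(H(X)+δ) - ln Σ_x p(x)^{1-λ}]`, where a `λ` whose sum diverges
contributes `-∞` (so that the value is `+∞` when the supremum is unbounded). -/
noncomputable def rateE {α : Type*} (p : α → ℝ) (H δ : ℝ) : EReal :=
  ⨆ l : {l : ℝ // 0 ≤ l},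
    if Summable (fun x => p x * p x ^ (-(l : ℝ))) then
      (((l : ℝ) * (H + δ) - Real.log (∑' x, p x * p x ^ (-(l : ℝ))) : ℝ) : EReal)
    else ⊥

/-- The tilted mean shift `δ(λ)`. -/
noncomputable def dshift {α : Type*} (p : α → ℝ) (H l : ℝ) : ℝ :=
  (∑' x, (p x * p x ^ (-l)) * (-Real.log (p x))) / (∑' y, p y * p y ^ (-l)) - H


section Aux
variable {α : Type*} {p : α → ℝ}

private lemma aux_le_one (hp0 : ∀ x, 0 ≤ p x) (hp1 : HasSum p 1) (x : α) : p x ≤ 1 :=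
  le_hasSum hp1 x fun y _ => hp0 y

private lemma aux_pt_nonneg (hp0 : ∀ x, 0 ≤ p x) (μ : ℝ) (x : α) :
    0 ≤ p x * p x ^ (-μ) :=
  mul_nonneg (hp0 x) (Real.rpow_nonneg (hp0 x) _)

private lemma aux_log_nonneg (hp0 : ∀ x, 0 ≤ p x) (hp1 : HasSum p 1) (x : α) :
    0 ≤ -Real.log (p x) :=
  neg_nonneg.2 (Real.log_nonpos (hp0 x) (aux_le_one hp0 hp1 x))

private lemma aux_pt_mono (hp0 : ∀ x, 0 ≤ p x) (hp1 : HasSum p 1) {μ l : ℝ} (h : μ ≤ l)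
    (x : α) : p x * p x ^ (-μ) ≤ p x * p x ^ (-l) := by
  rcases eq_or_lt_of_le (hp0 x) with hx | hx
  · simp [← hx]
  · exact mul_le_mul_of_nonneg_left
      (Real.rpow_le_rpow_of_exponent_ge hx (aux_le_one hp0 hp1 x) (neg_le_neg h)) (hp0 x)

private lemma aux_summable_mono (hp0 : ∀ x, 0 ≤ p x) (hp1 : HasSum p 1) {μ l : ℝ}
    (hμ : 0 ≤ μ) (h : μ ≤ l) (hs : Summable fun x => p x * p x ^ (-l)) :
    Summable fun x => p x * p x ^ (-μ) :=
  hs.of_nonneg_of_le (aux_pt_nonneg hp0 μ) (aux_pt_mono hp0 hp1 h)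

private lemma aux_pt_le_self (hp0 : ∀ x, 0 ≤ p x) (hp1 : HasSum p 1) {μ : ℝ} (hμ : 0 ≤ μ)
    (x : α) : p x ≤ p x * p x ^ (-μ) := by
  have := aux_pt_mono hp0 hp1 hμ (x := x)
  simpa using this

private lemma aux_Z_ge_one (hp0 : ∀ x, 0 ≤ p x) (hp1 : HasSum p 1) {μ : ℝ} (hμ : 0 ≤ μ)
    (hs : Summable fun x => p x * p x ^ (-μ)) : 1 ≤ ∑' x, p x * p x ^ (-μ) := by
  rw [← hp1.tsum_eq]
  exact Summable.tsum_le_tsum (aux_pt_le_self hp0 hp1 hμ) hp1.summable hs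

/-- pointwise bound on the log-weighted term. -/
private lemma aux_pt_log_le (hp0 : ∀ x, 0 ≤ p x) (hp1 : HasSum p 1) {μ l : ℝ}
    (h : μ < l) (x : α) :
    (p x * p x ^ (-μ)) * (-Real.log (p x)) ≤ (p x * p x ^ (-l)) * (1 / (l - μ)) := by
  rcases eq_or_lt_of_le (hp0 x) with hx | hx
  · simp [← hx]
  · set a := p x with ha
    have ha1 : a ≤ 1 := aux_le_one hp0 hp1 x
    have hε : (0:ℝ) < l - μ := by linarith
    -- key : a^(l-μ) * (-(log a)) * (l-μ) ≤ 1
    have hpow : (0:ℝ) < a ^ (l - μ) := Real.rpow_pos_of_pos hx _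
    have hlog : Real.log (a ^ (-(l - μ))) ≤ a ^ (-(l - μ)) - 1 :=
      Real.log_le_sub_one_of_pos (Real.rpow_pos_of_pos hx _)
    rw [Real.log_rpow hx] at hlog
    have hinv : a ^ (-(l - μ)) * a ^ (l - μ) = 1 := by
      rw [← Real.rpow_add hx]; simp
    have key : a ^ (l - μ) * (-Real.log a) * (l - μ) ≤ 1 := by nlinarith
    have hsplit : a ^ (-μ) = a ^ (-l) * a ^ (l - μ) := by
      rw [← Real.rpow_add hx]; ring_nf
    have hal : (0:ℝ) ≤ a ^ (-l) := Real.rpow_nonneg hx.le _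
    have h2 : a ^ (l - μ) * (-Real.log a) ≤ 1 / (l - μ) := by
      rw [le_div_iff₀ hε]; linarith [key]
    calc a * a ^ (-μ) * (-Real.log a) = (a * a ^ (-l)) * (a ^ (l - μ) * (-Real.log a)) := by
          rw [hsplit]; ring
      _ ≤ (a * a ^ (-l)) * (1 / (l - μ)) :=
          mul_le_mul_of_nonneg_left h2 (mul_nonneg hx.le hal)

private lemma aux_pt_log_nonneg (hp0 : ∀ x, 0 ≤ p x) (hp1 : HasSum p 1) (μ : ℝ) (x : α) :
    0 ≤ (p x * p x ^ (-μ)) * (-Real.log (p x)) :=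
  mul_nonneg (aux_pt_nonneg hp0 μ x) (aux_log_nonneg hp0 hp1 x)

private lemma aux_summable_log (hp0 : ∀ x, 0 ≤ p x) (hp1 : HasSum p 1) {μ l : ℝ}
    (h : μ < l) (hs : Summable fun x => p x * p x ^ (-l)) :
    Summable fun x => (p x * p x ^ (-μ)) * (-Real.log (p x)) :=
  (hs.mul_right (1 / (l - μ))).of_nonneg_of_le (aux_pt_log_nonneg hp0 hp1 μ)
    (aux_pt_log_le hp0 hp1 h)

/-- pointwise monotonicity in `l` of log-weighted term. -/
private lemma aux_pt_log_mono (hp0 : ∀ x, 0 ≤ p x) (hp1 : HasSum p 1) {μ l : ℝ} (h : μ ≤ l)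
    (x : α) : (p x * p x ^ (-μ)) * (-Real.log (p x)) ≤ (p x * p x ^ (-l)) * (-Real.log (p x)) :=
  mul_le_mul_of_nonneg_right (aux_pt_mono hp0 hp1 h x) (aux_log_nonneg hp0 hp1 x)

/-- Gibbs inequality: lower bound for `Z(λ)` by the tangent at `λ₁`. -/
private lemma aux_gibbs (hp0 : ∀ x, 0 ≤ p x) {l1 l : ℝ}
    (hZ1 : Summable fun x => p x * p x ^ (-l1))
    (hE1 : Summable fun x => (p x * p x ^ (-l1)) * (-Real.log (p x)))
    (hZ : Summable fun x => p x * p x ^ (-l))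
    (hZ1pos : 0 < ∑' x, p x * p x ^ (-l1)) :
    (∑' x, p x * p x ^ (-l1)) *
        Real.exp ((l - l1) * ((∑' x, (p x * p x ^ (-l1)) * (-Real.log (p x))) /
          (∑' x, p x * p x ^ (-l1)))) ≤ ∑' x, p x * p x ^ (-l) := by
  set Z1 := ∑' x, p x * p x ^ (-l1) with hZ1def
  set E1 := ∑' x, (p x * p x ^ (-l1)) * (-Real.log (p x)) with hE1def
  set m := (l - l1) * (E1 / Z1) with hm
  -- the comparison function
  set g : α → ℝ := fun x =>
    Real.exp m * ((p x * p x ^ (-l1)) * (1 + (l - l1) * (-Real.log (p x)) - m)) with hg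
  have hgsum : HasSum g (Real.exp m * (Z1 + ((l - l1) * E1 - m * Z1))) := by
    have h1 : HasSum (fun x => p x * p x ^ (-l1)) Z1 := hZ1.hasSum
    have h2 : HasSum (fun x => (p x * p x ^ (-l1)) * (-Real.log (p x))) E1 := hE1.hasSum
    have h3 := (h1.add ((h2.mul_left (l - l1)).sub (h1.mul_left m))).mul_left (Real.exp m)
    convert h3 using 2 with x
    · rfl
    simp only [hg]; ring
  have hpt : ∀ x, g x ≤ p x * p x ^ (-l) := by
    intro x
    rcases eq_or_lt_of_le (hp0 x) with hx | hx
    · simp [hg, ← hx]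
    · have hrw : ∀ y : ℝ, p x * p x ^ (-y) = p x * Real.exp ((-y) * Real.log (p x)) := by
        intro y; rw [Real.rpow_def_of_pos hx, mul_comm (Real.log (p x))]
      simp only [hg]
      rw [hrw l, hrw l1]
      set u := (l - l1) * (-Real.log (p x)) with hu
      have hexp : Real.exp m * (1 + u - m) ≤ Real.exp u := by
        have := Real.add_one_le_exp (u - m)
        have h4 := mul_le_mul_of_nonneg_left this (Real.exp_nonneg m)
        rw [← Real.exp_add] at h4
        calc Real.exp m * (1 + u - m) = Real.exp m * (u - m + 1) := by ring
          _ ≤ Real.exp (m + (u - m)) := h4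
          _ = Real.exp u := by ring_nf
      have hkey : Real.exp ((-l) * Real.log (p x)) =
          Real.exp ((-l1) * Real.log (p x)) * Real.exp u := by
        rw [← Real.exp_add]; congr 1; simp only [hu]; ring
      rw [hkey]
      calc Real.exp m * (p x * Real.exp ((-l1) * Real.log (p x)) *
            (1 + (l - l1) * (-Real.log (p x)) - m))
          = (p x * Real.exp ((-l1) * Real.log (p x))) * (Real.exp m * (1 + u - m)) := by
            rw [hu]; ring
        _ ≤ (p x * Real.exp ((-l1) * Real.log (p x))) * Real.exp u :=
            mul_le_mul_of_nonneg_left hexp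
              (mul_nonneg hx.le (Real.exp_nonneg _))
        _ = p x * (Real.exp ((-l1) * Real.log (p x)) * Real.exp u) := by ring
  have hsum_le : ∑' x, g x ≤ ∑' x, p x * p x ^ (-l) :=
    Summable.tsum_le_tsum hpt hgsum.summable hZ
  have hval : ∑' x, g x = Z1 * Real.exp m := by
    rw [hgsum.tsum_eq]
    have : m * Z1 = (l - l1) * E1 := by
      rw [hm]; field_simp
    rw [this]; ring
  rw [← hval]; exact hsum_le

private lemma aux_dshift_zero {H : ℝ} (hp1 : HasSum p 1)
    (hH : HasSum (fun x => p x * (-Real.log (p x))) H) : dshift p H 0 = 0 := by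
  simp only [dshift, neg_zero, Real.rpow_zero, mul_one]
  rw [hp1.tsum_eq, hH.tsum_eq]
  simp

private lemma aux_H_nonneg {H : ℝ} (hp0 : ∀ x, 0 ≤ p x) (hp1 : HasSum p 1)
    (hH : HasSum (fun x => p x * (-Real.log (p x))) H) : 0 ≤ H := by
  rw [← hH.tsum_eq]
  exact tsum_nonneg fun x => mul_nonneg (hp0 x) (aux_log_nonneg hp0 hp1 x)

/-- Tangent upper bound on the objective at any admissible `l`, from data at `l1`. -/
private lemma aux_upper (hp0 : ∀ x, 0 ≤ p x) (hp1 : HasSum p 1) {H l1 l d : ℝ}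
    (hl : 0 ≤ l) (hl1 : 0 ≤ l1)
    (hZ1 : Summable fun x => p x * p x ^ (-l1))
    (hE1 : Summable fun x => (p x * p x ^ (-l1)) * (-Real.log (p x)))
    (hZ : Summable fun x => p x * p x ^ (-l))
    (hd : d ≤ dshift p H l1) :
    l * (H + d) - Real.log (∑' x, p x * p x ^ (-l)) ≤
      l1 * (H + d) - Real.log (∑' x, p x * p x ^ (-l1)) + l1 * (dshift p H l1 - d) := by
  set Z1 := ∑' x, p x * p x ^ (-l1) with hZ1def
  set E1 := ∑' x, (p x * p x ^ (-l1)) * (-Real.log (p x)) with hE1def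
  set Z := ∑' x, p x * p x ^ (-l) with hZdef
  have hZ1pos : (0:ℝ) < Z1 := lt_of_lt_of_le one_pos (aux_Z_ge_one hp0 hp1 hl1 hZ1)
  have hZpos : (0:ℝ) < Z := lt_of_lt_of_le one_pos (aux_Z_ge_one hp0 hp1 hl hZ)
  have hgibbs := aux_gibbs hp0 hZ1 hE1 hZ hZ1pos
  rw [← hZ1def, ← hE1def, ← hZdef] at hgibbs
  have hlog : Real.log Z1 + (l - l1) * (E1 / Z1) ≤ Real.log Z := by
    have h1 := Real.log_le_log (by positivity) hgibbs
    rwa [Real.log_mul (ne_of_gt hZ1pos) (Real.exp_ne_zero _), Real.log_exp] at h1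
  have hdsh : dshift p H l1 = E1 / Z1 - H := by rw [dshift]
  have hprod : l * (d - dshift p H l1) ≤ 0 :=
    mul_nonpos_of_nonneg_of_nonpos hl (by linarith)
  rw [hdsh] at hprod ⊢
  nlinarith [hlog, hprod]

/-- Continuity of `dshift` on `[0, l]`. -/
private lemma aux_dshift_cont (hp0 : ∀ x, 0 ≤ p x) (hp1 : HasSum p 1) {H l : ℝ}
    (hl : 0 ≤ l)
    (hZl : Summable fun x => p x * p x ^ (-l))
    (hEl : Summable fun x => (p x * p x ^ (-l)) * (-Real.log (p x))) :
    ContinuousOn (fun μ => dshift p H μ) (Set.Icc 0 l) := by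
  have hcont : ∀ x : α, Continuous fun μ : Set.Icc (0:ℝ) l => p x * p x ^ (-(μ:ℝ)) := by
    intro x
    rcases eq_or_lt_of_le (hp0 x) with hx | hx
    · simp only [← hx, zero_mul]; exact continuous_const
    · have : (fun μ : Set.Icc (0:ℝ) l => p x * p x ^ (-(μ:ℝ))) =
          fun μ : Set.Icc (0:ℝ) l => p x * Real.exp ((-(μ:ℝ)) * Real.log (p x)) :=
        funext fun μ => by rw [Real.rpow_def_of_pos hx, mul_comm (Real.log _)]
      rw [this]
      exact continuous_const.mul (Real.continuous_exp.comp
        ((continuous_subtype_val.neg).mul continuous_const))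
  have hZc : ContinuousOn (fun μ : ℝ => ∑' x, p x * p x ^ (-μ)) (Set.Icc 0 l) := by
    rw [continuousOn_iff_continuous_restrict]
    exact continuous_tsum hcont hZl fun x μ => by
      rw [Real.norm_eq_abs, abs_of_nonneg (aux_pt_nonneg hp0 _ x)]
      exact aux_pt_mono hp0 hp1 μ.2.2 x
  have hEc : ContinuousOn (fun μ : ℝ => ∑' x, (p x * p x ^ (-μ)) * (-Real.log (p x)))
      (Set.Icc 0 l) := by
    rw [continuousOn_iff_continuous_restrict]
    refine continuous_tsum (fun x => (hcont x).mul continuous_const) hEl fun x μ => ?_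
    rw [Real.norm_eq_abs, abs_of_nonneg (aux_pt_log_nonneg hp0 hp1 _ x)]
    exact aux_pt_log_mono hp0 hp1 μ.2.2 x
  have hne : ∀ μ ∈ Set.Icc (0:ℝ) l, (∑' x, p x * p x ^ (-μ)) ≠ 0 := fun μ hμ =>
    ne_of_gt (lt_of_lt_of_le one_pos
      (aux_Z_ge_one hp0 hp1 hμ.1 (aux_summable_mono hp0 hp1 hμ.1 hμ.2 hZl)))
  exact (hEc.div hZc hne).sub continuousOn_const

end Aux

/-- The rate function `r_X` is convex and non-decreasing on `[0,∞)`, and strictly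
increasing on `[0, Δ*(X))`, where `Δ*(X) = lim_{λ↑λ*(X)} δ(λ)` (a real number `d ≥ 0`
lies below `Δ*(X)` iff `d < δ(λ)` for some admissible `λ`). -/
theorem stmt5 {α : Type} [Countable α] (p : α → ℝ)
    (hp0 : ∀ x, 0 ≤ p x) (hp1 : HasSum p 1)
    (H S2 : ℝ)
    (hH : HasSum (fun x => p x * (-Real.log (p x))) H)
    (hS2 : HasSum (fun x => p x * (Real.log (p x)) ^ 2) S2)
    (hvar : 0 < S2 - H ^ 2)
    (hlstar : ∃ l : ℝ, 0 < l ∧ Summable (fun x => p x * p x ^ (-l))) :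
    (∀ a ∈ Set.Ici (0 : ℝ), ∀ b ∈ Set.Ici (0 : ℝ), ∀ s t : ℝ,
        0 ≤ s → 0 ≤ t → s + t = 1 →
        rateE p H (s * a + t * b) ≤ (s : EReal) * rateE p H a + (t : EReal) * rateE p H b) ∧
    MonotoneOn (rateE p H) (Set.Ici 0) ∧
    StrictMonoOn (rateE p H)
      {d : ℝ | 0 ≤ d ∧ ∃ l : ℝ, 0 ≤ l ∧ Summable (fun x => p x * p x ^ (-l)) ∧
          d < dshift p H l} := by
  refine ⟨?_, ?_, ?_⟩
  · -- convexity
    rintro a _ b _ s t hs ht hst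
    rcases eq_or_lt_of_le hs with hs0 | hs0
    · have ht1 : t = 1 := by linarith
      rw [← hs0, ht1]; simp
    rcases eq_or_lt_of_le ht with ht0 | ht0
    · have hs1 : s = 1 := by linarith
      rw [← ht0, hs1]; simp
    conv_lhs => rw [rateE]
    refine iSup_le fun l => ?_
    by_cases hS : Summable (fun x => p x * p x ^ (-(l : ℝ)))
    · rw [if_pos hS]
      have key : ((l : ℝ) * (H + (s * a + t * b)) -
            Real.log (∑' x, p x * p x ^ (-(l : ℝ))) : ℝ)
          = s * ((l : ℝ) * (H + a) - Real.log (∑' x, p x * p x ^ (-(l : ℝ))))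
            + t * ((l : ℝ) * (H + b) - Real.log (∑' x, p x * p x ^ (-(l : ℝ)))) := by
        have hts : t = 1 - s := by linarith
        rw [hts]; ring
      rw [key, EReal.coe_add, EReal.coe_mul, EReal.coe_mul]
      have hA : (((l : ℝ) * (H + a) - Real.log (∑' x, p x * p x ^ (-(l : ℝ))) : ℝ) : EReal)
          ≤ rateE p H a := by
        rw [rateE]; refine le_iSup_of_le l ?_; rw [if_pos hS]
      have hB : (((l : ℝ) * (H + b) - Real.log (∑' x, p x * p x ^ (-(l : ℝ))) : ℝ) : EReal)
          ≤ rateE p H b := by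
        rw [rateE]; refine le_iSup_of_le l ?_; rw [if_pos hS]
      exact add_le_add (mul_le_mul_of_nonneg_left hA (by exact_mod_cast hs))
        (mul_le_mul_of_nonneg_left hB (by exact_mod_cast ht))
    · rw [if_neg hS]; exact bot_le
  · -- monotone
    intro d1 _ d2 _ h12
    rw [rateE, rateE]
    refine iSup_mono fun l => ?_
    by_cases hS : Summable (fun x => p x * p x ^ (-(l : ℝ)))
    · rw [if_pos hS, if_pos hS]
      exact EReal.coe_le_coe_iff.2
        (sub_le_sub_right (mul_le_mul_of_nonneg_left (by linarith) l.2) _)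
    · rw [if_neg hS]; exact bot_le
  · -- strict monotone
    intro d1 hd1 d2 _ hlt
    obtain ⟨hd10, l, hl0, hZl, hdl⟩ := hd1
    have hH0 : 0 ≤ H := aux_H_nonneg hp0 hp1 hH
    have hEl : Summable fun x => (p x * p x ^ (-l)) * (-Real.log (p x)) := by
      by_contra hc
      have hz : dshift p H l = -H := by
        rw [dshift, tsum_eq_zero_of_not_summable hc, zero_div, zero_sub]
      rw [hz] at hdl; linarith
    obtain ⟨l1, hl1mem, hZ1, hE1, hgt, hltd⟩ :
        ∃ l1, l1 ∈ Set.Icc (0:ℝ) l ∧ (Summable fun x => p x * p x ^ (-l1)) ∧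
          (Summable fun x => (p x * p x ^ (-l1)) * (-Real.log (p x))) ∧
          d1 < dshift p H l1 ∧ dshift p H l1 < d2 := by
      by_cases hcase : dshift p H l < d2
      · exact ⟨l, ⟨hl0, le_refl l⟩, hZl, hEl, hdl, hcase⟩
      · push_neg at hcase
        have hcont := aux_dshift_cont hp0 hp1 hl0 hZl hEl (H := H)
        have h0 : dshift p H 0 = 0 := aux_dshift_zero hp1 hH
        have hmem : (d1 + d2) / 2 ∈ Set.Icc (dshift p H 0) (dshift p H l) := by
          rw [h0]; constructor <;> [linarith; linarith]
        obtain ⟨l1, hl1, heq⟩ := intermediate_value_Icc hl0 hcont hmem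
        have hZ1 := aux_summable_mono hp0 hp1 hl1.1 hl1.2 hZl
        have hE1 : Summable fun x => (p x * p x ^ (-l1)) * (-Real.log (p x)) := by
          rcases eq_or_lt_of_le hl1.2 with he | he
          · rw [he]; exact hEl
          · exact aux_summable_log hp0 hp1 he hZl
        have heq' : dshift p H l1 = (d1 + d2) / 2 := heq
        exact ⟨l1, hl1, hZ1, hE1, by rw [heq']; linarith, by rw [heq']; linarith⟩
    have hl1pos : 0 < l1 := by
      rcases eq_or_lt_of_le hl1mem.1 with he | he
      · exfalso; rw [← he, aux_dshift_zero hp1 hH] at hgt; linarith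
      · exact he
    have hB1 : rateE p H d1 ≤
        ((l1 * (H + d1) - Real.log (∑' x, p x * p x ^ (-l1))
          + l1 * (dshift p H l1 - d1) : ℝ) : EReal) := by
      rw [rateE]
      refine iSup_le fun lam => ?_
      by_cases hS : Summable (fun x => p x * p x ^ (-(lam : ℝ)))
      · rw [if_pos hS]
        exact EReal.coe_le_coe_iff.2
          (aux_upper hp0 hp1 lam.2 hl1mem.1 hZ1 hE1 hS hgt.le)
      · rw [if_neg hS]; exact bot_le
    have hB2 : ((l1 * (H + d2) - Real.log (∑' x, p x * p x ^ (-l1)) : ℝ) : EReal)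
        ≤ rateE p H d2 := by
      rw [rateE]
      refine le_iSup_of_le ⟨l1, hl1mem.1⟩ ?_
      rw [if_pos hZ1]
    have hmid : (l1 * (H + d1) - Real.log (∑' x, p x * p x ^ (-l1))
          + l1 * (dshift p H l1 - d1) : ℝ)
        < (l1 * (H + d2) - Real.log (∑' x, p x * p x ^ (-l1)) : ℝ) := by
      nlinarith [mul_lt_mul_of_pos_left
        (show dshift p H l1 - d1 < d2 - d1 by linarith) hl1pos]
    exact lt_of_le_of_lt hB1 (lt_of_lt_of_le (EReal.coe_lt_coe_iff.2 hmid) hB2)
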